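/- Let q be an odd prime power and S a finite set of monic degree-two polynomials in 𝔽_q[x], each written uniquely as f = (x - a_f)² - b_f. If the map f ↦ b_f is injective on S (i.e., |D_S| = |S|), then the compositional monoid C_S generated by S is free: the canonical surjection from the free monoid S* to C_S is an isomorphism. -/

import Mathlib

open Polynomial

lemma quad_expand {F : Type*} [Field F] (f : F[X]) (hf : f.Monic) (hd : f.natDegree = 2) :
    f = X^2 + C (f.coeff 1) * X + C (f.coeff 0) := by
  ext n
  rcases n with _|_|_|n <;>
    simp [coeff_X_pow, coeff_C, coeff_X, Nat.succ_eq_add_one]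
  · have : f.coeff 2 = 1 := by have := hf.coeff_natDegree; rwa [hd] at this
    simpa using this
  · exact coeff_eq_zero_of_natDegree_lt (by omega)

lemma key_cancel {F : Type*} [Field F] (h2 : (2:F) ≠ 0) (f g P Q : F[X])
    (hf : f.Monic) (hfd : f.natDegree = 2) (hg : g.Monic) (hgd : g.natDegree = 2)
    (hP : P.Monic) (hQ : Q.Monic) (hd : P.natDegree = Q.natDegree) (hd1 : 1 ≤ P.natDegree)
    (heq : f.comp P = g.comp Q) :
    f.coeff 1 ^ 2 - 4 * f.coeff 0 = g.coeff 1 ^ 2 - 4 * g.coeff 0 ∧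
      (f.coeff 1 = g.coeff 1 → P = Q) := by
  have h4 : (4:F) ≠ 0 := by
    have : (4:F) = 2 * 2 := by norm_num
    rw [this]; exact mul_ne_zero h2 h2
  set c1 := f.coeff 1 with hc1; set c0 := f.coeff 0
  set d1 := g.coeff 1 with hd1'; set d0 := g.coeff 0
  have hcomp : P^2 + C c1 * P + C c0 = Q^2 + C d1 * Q + C d0 := by
    have e1 := quad_expand f hf hfd
    have e2 := quad_expand g hg hgd
    calc P^2 + C c1 * P + C c0 = f.comp P := by rw [e1]; simp; rfl
    _ = g.comp Q := heq
    _ = Q^2 + C d1 * Q + C d0 := by rw [e2]; simp; rfl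
  set u := P + C (c1/2) with hu
  set v := Q + C (d1/2) with hv
  have htwo : (2 : F[X]) = C 2 := (map_ofNat C 2).symm
  have hmul : ∀ e : F, (2 : F[X]) * C (e/2) = C e := by
    intro e
    rw [htwo, ← C_mul, mul_div_cancel₀ e h2]
  have hfu : u^2 + C (c0 - c1^2/4) = v^2 + C (d0 - d1^2/4) := by
    rw [hu, hv]
    calc (P + C (c1/2))^2 + C (c0 - c1^2/4)
        = P^2 + 2 * C (c1/2) * P + (C (c1/2)^2 + C (c0 - c1^2/4)) := by ring
      _ = P^2 + C c1 * P + C c0 := by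
          rw [hmul c1, ← C_pow, ← C_add]
          congr 2
          field_simp
          ring
      _ = Q^2 + C d1 * Q + C d0 := hcomp
      _ = Q^2 + 2 * C (d1/2) * Q + (C (d1/2)^2 + C (d0 - d1^2/4)) := by
          rw [hmul d1, ← C_pow, ← C_add]
          congr 2
          field_simp
          ring
      _ = (Q + C (d1/2))^2 + C (d0 - d1^2/4) := by ring
  have hfac : (u - v) * (u + v) = C ((d0 - d1^2/4) - (c0 - c1^2/4)) := by
    rw [C_sub]; linear_combination hfu
  have hPQ : (P + Q).natDegree = P.natDegree := by
    have hco : (P + Q).coeff P.natDegree = 2 := by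
      rw [coeff_add, hP.coeff_natDegree, hd, hQ.coeff_natDegree]; norm_num
    apply le_antisymm
    · exact (natDegree_add_le P Q).trans (by rw [hd, max_self])
    · exact le_natDegree_of_ne_zero (hco ▸ h2)
  have huv : (u + v).natDegree = P.natDegree := by
    have h5 : u + v = (P + Q) + C (c1/2 + d1/2) := by rw [hu, hv, C_add]; ring
    rw [h5, natDegree_add_C]
    exact hPQ
  have huv0 : u + v ≠ 0 := fun h0 => by
    rw [h0, natDegree_zero] at huv; omega
  have huveq : u = v := by
    by_contra hne
    have h1 : u - v ≠ 0 := sub_ne_zero.mpr hne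
    have := natDegree_mul h1 huv0
    rw [hfac, natDegree_C, huv] at this
    omega
  have hC0 : C ((d0 - d1^2/4) - (c0 - c1^2/4)) = 0 := by
    rw [← hfac, huveq]; ring
  have he : (d0 - d1^2/4) - (c0 - c1^2/4) = 0 := by
    exact_mod_cast (C_eq_zero).mp hC0
  constructor
  · field_simp at he
    linear_combination he
  · intro hcd
    have h5 : P + C (c1/2) = Q + C (d1/2) := by rw [← hu, ← hv]; exact huveq
    rw [← hcd] at h5
    exact add_right_cancel h5

lemma foldr_monic_deg {F : Type*} [Field F] (l : List F[X])
    (h : ∀ f ∈ l, f.Monic ∧ f.natDegree = 2) :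
    (l.foldr Polynomial.comp X).Monic ∧
      (l.foldr Polynomial.comp X).natDegree = 2 ^ l.length := by
  induction l with
  | nil => simpa using monic_X
  | cons f t ih =>
    obtain ⟨hm, hd⟩ := ih (fun g hg => h g (List.mem_cons_of_mem f hg))
    obtain ⟨hfm, hfd⟩ := h f List.mem_cons_self
    have hne : (t.foldr Polynomial.comp X).natDegree ≠ 0 := by
      rw [hd]; positivity
    constructor
    · exact hfm.comp hm hne
    · rw [List.foldr_cons, natDegree_comp, hfd, hd, List.length_cons]
      ring

theorem comp_monoid_free_aux (F : Type*) [Field F] [Fintype F]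
    (hchar : ringChar F ≠ 2) (S : Finset F[X])
    (hmonic : ∀ f ∈ S, f.Monic) (hdeg : ∀ f ∈ S, f.natDegree = 2)
    (hinj : ∀ f ∈ S, ∀ g ∈ S,
      f.coeff 1 ^ 2 - 4 * f.coeff 0 = g.coeff 1 ^ 2 - 4 * g.coeff 0 → f = g) :
    Function.Injective
      (fun l : List {f // f ∈ S} =>
        (l.map (fun f : {f // f ∈ S} => (f : F[X]))).foldr Polynomial.comp X) := by
  have h2 : (2:F) ≠ 0 := Ring.two_ne_zero hchar
  have hall : ∀ l : List {f // f ∈ S}, ∀ g ∈ l.map (fun f : {f // f ∈ S} => (f : F[X])),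
      g.Monic ∧ g.natDegree = 2 := by
    rintro l g hg
    simp only [List.mem_map] at hg
    obtain ⟨⟨f, hf⟩, _, rfl⟩ := hg
    exact ⟨hmonic f hf, hdeg f hf⟩
  intro l1 l2 h
  dsimp only at h
  induction l1 generalizing l2 with
  | nil =>
    cases l2 with
    | nil => rfl
    | cons g t =>
      exfalso
      obtain ⟨hm, hd⟩ := foldr_monic_deg _ (hall (g :: t))
      try simp only [List.map_nil, List.foldr_nil] at h
      have hc := congrArg natDegree h
      rw [natDegree_X, hd] at hc
      simp only [List.length_map, List.length_cons, pow_succ] at hc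
      have h1 : 1 ≤ 2 ^ t.length := Nat.one_le_two_pow
      omega
  | cons f t ih =>
    cases l2 with
    | nil =>
      exfalso
      obtain ⟨hm, hd⟩ := foldr_monic_deg _ (hall (f :: t))
      try simp only [List.map_nil, List.foldr_nil] at h
      have hc := congrArg natDegree h
      rw [natDegree_X, hd] at hc
      simp only [List.length_map, List.length_cons, pow_succ] at hc
      have h1 : 1 ≤ 2 ^ t.length := Nat.one_le_two_pow
      omega
    | cons g t2 =>
      try simp only [List.map_cons, List.foldr_cons] at h
      obtain ⟨hPm, hPd⟩ := foldr_monic_deg _ (hall t)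
      obtain ⟨hQm, hQd⟩ := foldr_monic_deg _ (hall t2)
      have hdeq : ((List.map (fun f : {f // f ∈ S} => (f : F[X])) t).foldr Polynomial.comp X).natDegree
          = ((List.map (fun f : {f // f ∈ S} => (f : F[X])) t2).foldr Polynomial.comp X).natDegree := by
        have hc := congrArg natDegree h
        rw [natDegree_comp, natDegree_comp, hdeg f.1 f.2, hdeg g.1 g.2, hPd, hQd] at hc
        rw [hPd, hQd]
        omega
      have hge1 : 1 ≤ ((List.map (fun f : {f // f ∈ S} => (f : F[X])) t).foldr Polynomial.comp X).natDegree := by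
        rw [hPd]; exact Nat.one_le_two_pow
      obtain ⟨hdisc, himpl⟩ := key_cancel h2 f.1 g.1 _ _ (hmonic f.1 f.2) (hdeg f.1 f.2)
        (hmonic g.1 g.2) (hdeg g.1 g.2) hPm hQm hdeq hge1 h
      have hfg : (f : F[X]) = g := hinj f.1 f.2 g.1 g.2 hdisc
      have hPQ := himpl (by rw [hfg])
      have ht := ih hPQ
      rw [ht]
      congr 1
      exact Subtype.ext hfg


lemma coeM_norm {F : Type*} [Field F] {S : Finset F[X]} (l : List {f // f ∈ S}) :
    (List.map (fun f => f) (do let a ← l; pure ((a : F[X])))) =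
      List.map (fun f : {f // f ∈ S} => (f : F[X])) l := by
  induction l with
  | nil => rfl
  | cons a t ih => simpa using ih


/-- Let `S` be a finite set of monic degree-two polynomials over a finite field of odd
characteristic, each written uniquely as `f = (x - a_f)² - b_f`.  If the map `f ↦ b_f`
is injective on `S` (here expressed via `4 b_f = (coeff 1 f)² - 4 (coeff 0 f)`), then
the compositional monoid generated by `S` is free: the canonical map from words over
`S` to compositions is injective. -/
theorem comp_monoid_free_of_distinguished_injective (F : Type*) [Field F] [Fintype F]
    (hchar : ringChar F ≠ 2) (S : Finset F[X])
    (hmonic : ∀ f ∈ S, f.Monic) (hdeg : ∀ f ∈ S, f.natDegree = 2)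
    (hinj : ∀ f ∈ S, ∀ g ∈ S,
      f.coeff 1 ^ 2 - 4 * f.coeff 0 = g.coeff 1 ^ 2 - 4 * g.coeff 0 → f = g) :
    Function.Injective
      (fun l : List {f // f ∈ S} => (l.map (fun f => (f : F[X]))).foldr Polynomial.comp X) := by
  intro l1 l2 h
  apply comp_monoid_free_aux F hchar S hmonic hdeg hinj
  dsimp only at h ⊢
  rw [coeM_norm, coeM_norm] at h
  exact h
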